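/- arXiv:2002.09486 — 4 statements merged into one kernel-verified Lean document; each statement's English description precedes it below -/
import Mathlib

section
/- Let q ≥ 1 and let f, g : ℂ × ℤ^q → ℂ satisfy g(s; -l_1,…,-l_q) = ∑ over all decompositions i_b + j_b = l_b with i_b, j_b ≥ 0 (for 1 ≤ b ≤ q) of (∏_{a=1}^q C(l_a, i_a)) · f(s - i_1 - ⋯ - i_q; -j_1,…,-j_q), for all s ∈ ℂ and all l_1,…,l_q ∈ ℕ₀. Then f(s; -l_1,…,-l_q) = ∑ over the same index set of (∏_{a=1}^q (-1)^{i_a} C(l_a, i_a)) · g(s - i_1 - ⋯ - i_q; -j_1,…,-j_q) for all s ∈ ℂ and l_1,…,l_q ∈ ℕ₀. -/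
open Finset

theorem stmt_2 (q : ℕ) (hq : 1 ≤ q) (f g : ℂ × (Fin q → ℤ) → ℂ)
    (h : ∀ (s : ℂ) (l : Fin q → ℕ), g (s, fun b => -(l b : ℤ)) =
      ∑ i ∈ Finset.Iic l,
        (∏ a, ((l a).choose (i a) : ℂ)) *
          f (s - ∑ a, (i a : ℂ), fun b => -((l b - i b : ℕ) : ℤ))) :
    ∀ (s : ℂ) (l : Fin q → ℕ), f (s, fun b => -(l b : ℤ)) =
      ∑ i ∈ Finset.Iic l,
        (∏ a, (-1 : ℂ) ^ (i a) * ((l a).choose (i a) : ℂ)) *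
          g (s - ∑ a, (i a : ℂ), fun b => -((l b - i b : ℕ) : ℤ)) := by
  intro s l
  have hIic : ∀ (k : Fin q → ℕ),
      (Finset.Iic k : Finset (Fin q → ℕ)) = Fintype.piFinset fun a => Finset.Iic (k a) := by
    intro k; ext x; simp [Fintype.mem_piFinset, Pi.le_def]
  -- key coefficient evaluation
  have key : ∀ k : Fin q → ℕ, k ≤ l →
      (∑ i ∈ Finset.Iic k, ∏ a,
        (-1:ℂ)^(i a) * ((l a).choose (i a) : ℂ) * (((l a - i a).choose (k a - i a) : ℕ) : ℂ))
        = if k = 0 then 1 else 0 := by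
    intro k hk
    have hps := Finset.prod_univ_sum (t := fun a : Fin q => Finset.Iic (k a))
      (f := fun (a : Fin q) (t : ℕ) =>
        (-1:ℂ)^t * ((l a).choose t : ℂ) * (((l a - t).choose (k a - t) : ℕ) : ℂ))
    rw [hIic, ← hps]
    have hco : ∀ a : Fin q,
        (∑ t ∈ Finset.Iic (k a),
          (-1:ℂ)^t * ((l a).choose t : ℂ) * (((l a - t).choose (k a - t) : ℕ) : ℂ))
          = if k a = 0 then 1 else 0 := by
      intro a
      have hrange : Finset.Iic (k a) = Finset.range (k a + 1) := by
        ext t; simp [Nat.lt_succ_iff]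
      have halt : (∑ m ∈ Finset.range (k a + 1), ((-1:ℂ)^m * ((k a).choose m : ℂ)))
          = if k a = 0 then 1 else 0 := by
        have := congrArg (Int.cast : ℤ → ℂ) (Int.alternating_sum_range_choose (n := k a))
        push_cast at this
        simpa using this
      calc (∑ t ∈ Finset.Iic (k a),
            (-1:ℂ)^t * ((l a).choose t : ℂ) * (((l a - t).choose (k a - t) : ℕ) : ℂ))
          = ∑ t ∈ Finset.Iic (k a),
            ((l a).choose (k a) : ℂ) * ((-1:ℂ)^t * ((k a).choose t : ℂ)) := by
            refine Finset.sum_congr rfl fun t ht => ?_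
            rw [Finset.mem_Iic] at ht
            have hid := Nat.choose_mul (n := l a) ht
            have : ((l a).choose t * (l a - t).choose (k a - t) : ℕ) =
                ((l a).choose (k a) * (k a).choose t : ℕ) := hid.symm
            calc (-1:ℂ)^t * ((l a).choose t : ℂ) * (((l a - t).choose (k a - t) : ℕ) : ℂ)
                = (-1:ℂ)^t * (((l a).choose t * (l a - t).choose (k a - t) : ℕ) : ℂ) := by
                  push_cast; ring
              _ = (-1:ℂ)^t * (((l a).choose (k a) * (k a).choose t : ℕ) : ℂ) := by rw [this]
              _ = ((l a).choose (k a) : ℂ) * ((-1:ℂ)^t * ((k a).choose t : ℂ)) := by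
                  push_cast; ring
        _ = ((l a).choose (k a) : ℂ) * (if k a = 0 then 1 else 0) := by
            rw [← Finset.mul_sum, hrange, halt]
        _ = if k a = 0 then 1 else 0 := by
            by_cases h0 : k a = 0
            · simp [h0]
            · simp [h0]
    rw [Finset.prod_congr rfl fun a _ => hco a]
    by_cases h0 : k = 0
    · subst h0; simp
    · have : ∃ a, k a ≠ 0 := by
        by_contra hc
        push_neg at hc
        exact h0 (funext hc)
      obtain ⟨a, ha⟩ := this
      rw [Finset.prod_eq_zero (Finset.mem_univ a) (by simp [ha])]
      simp [h0]
  symm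
  calc (∑ i ∈ Finset.Iic l,
        (∏ a, (-1 : ℂ) ^ (i a) * ((l a).choose (i a) : ℂ)) *
          g (s - ∑ a, (i a : ℂ), fun b => -((l b - i b : ℕ) : ℤ)))
      = ∑ i ∈ Finset.Iic l, ∑ j ∈ Finset.Iic (fun b => l b - i b),
          (∏ a, (-1 : ℂ) ^ (i a) * ((l a).choose (i a) : ℂ)) *
            ((∏ a, ((l a - i a).choose (j a) : ℂ)) *
              f (s - ∑ a, (i a : ℂ) - ∑ a, (j a : ℂ), fun b => -((l b - i b - j b : ℕ) : ℤ))) := by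
        refine Finset.sum_congr rfl fun i hi => ?_
        rw [h (s - ∑ a, (i a : ℂ)) (fun b => l b - i b), Finset.mul_sum]
    _ = ∑ p ∈ (Finset.Iic l).sigma (fun i => Finset.Iic (fun b => l b - i b)),
          (∏ a, (-1 : ℂ) ^ (p.1 a) * ((l a).choose (p.1 a) : ℂ)) *
            ((∏ a, ((l a - p.1 a).choose (p.2 a) : ℂ)) *
              f (s - ∑ a, (p.1 a : ℂ) - ∑ a, (p.2 a : ℂ),
                fun b => -((l b - p.1 b - p.2 b : ℕ) : ℤ))) := by
        rw [Finset.sum_sigma]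
    _ = ∑ p ∈ (Finset.Iic l).sigma (fun k => Finset.Iic k),
          (∏ a, (-1 : ℂ) ^ (p.2 a) * ((l a).choose (p.2 a) : ℂ) *
            ((l a - p.2 a).choose (p.1 a - p.2 a) : ℂ)) *
            f (s - ∑ a, (p.1 a : ℂ), fun b => -((l b - p.1 b : ℕ) : ℤ)) := by
        refine Finset.sum_nbij'
          (i := fun p : (_ : Fin q → ℕ) × (Fin q → ℕ) =>
            (⟨fun b => p.1 b + p.2 b, p.1⟩ : (_ : Fin q → ℕ) × (Fin q → ℕ)))
          (j := fun p : (_ : Fin q → ℕ) × (Fin q → ℕ) =>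
            (⟨p.2, fun b => p.1 b - p.2 b⟩ : (_ : Fin q → ℕ) × (Fin q → ℕ))) ?_ ?_ ?_ ?_ ?_
        · intro p hp
          simp only [Finset.mem_sigma, Finset.mem_Iic, Pi.le_def] at hp ⊢
          obtain ⟨h1, h2⟩ := hp
          constructor <;> intro a
          · have := h1 a; have := h2 a; omega
          · omega
        · intro p hp
          simp only [Finset.mem_sigma, Finset.mem_Iic, Pi.le_def] at hp ⊢
          obtain ⟨h1, h2⟩ := hp
          constructor <;> intro a
          · exact le_trans (h2 a) (h1 a)
          · have := h1 a; have := h2 a; omega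
        · rintro ⟨pi, pj⟩ hp
          simp only [Finset.mem_sigma, Finset.mem_Iic, Pi.le_def] at hp
          show (⟨pi, fun b => (pi b + pj b) - pi b⟩ : (_ : Fin q → ℕ) × (Fin q → ℕ))
            = ⟨pi, pj⟩
          exact Sigma.ext rfl (heq_of_eq (funext fun b => show pi b + pj b - pi b = pj b by omega))
        · rintro ⟨pk, pi⟩ hp
          simp only [Finset.mem_sigma, Finset.mem_Iic, Pi.le_def] at hp
          obtain ⟨h1, h2⟩ := hp
          show (⟨fun b => pi b + (pk b - pi b), pi⟩ : (_ : Fin q → ℕ) × (Fin q → ℕ))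
            = ⟨pk, pi⟩
          exact Sigma.ext
            (funext fun b => show pi b + (pk b - pi b) = pk b by have := h2 b; omega)
            (heq_of_eq rfl)
        · rintro ⟨pi, pj⟩ hp
          simp only [Finset.mem_sigma, Finset.mem_Iic, Pi.le_def] at hp
          obtain ⟨h1, h2⟩ := hp
          dsimp only
          have e1 : ∀ a : Fin q, (pi a + pj a) - pi a = pj a := fun a => by omega
          have e2 : (s - ∑ a, (pi a : ℂ) - ∑ a, (pj a : ℂ))
              = s - ∑ a, (((pi a + pj a : ℕ)) : ℂ) := by
            push_cast
            rw [Finset.sum_add_distrib, sub_sub]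
          have e3 : ∀ b : Fin q, l b - pi b - pj b = l b - (pi b + pj b) := fun b => by omega
          simp only [e1, e3]
          have e4 : (∏ a : Fin q, (-1:ℂ)^(pi a) * ((l a).choose (pi a) : ℂ)
                * (((l a - pi a).choose (pj a)) : ℂ))
              = (∏ a : Fin q, (-1:ℂ)^(pi a) * ((l a).choose (pi a) : ℂ))
                * ∏ a : Fin q, (((l a - pi a).choose (pj a)) : ℂ) := by
            rw [← Finset.prod_mul_distrib]
          rw [← e2, e4]
          ring
    _ = ∑ k ∈ Finset.Iic l, ∑ i ∈ Finset.Iic k,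
          (∏ a, (-1 : ℂ) ^ (i a) * ((l a).choose (i a) : ℂ) *
            ((l a - i a).choose (k a - i a) : ℂ)) *
            f (s - ∑ a, (k a : ℂ), fun b => -((l b - k b : ℕ) : ℤ)) := by
        rw [Finset.sum_sigma]
    _ = ∑ k ∈ Finset.Iic l, (if k = 0 then 1 else 0) *
          f (s - ∑ a, (k a : ℂ), fun b => -((l b - k b : ℕ) : ℤ)) := by
        refine Finset.sum_congr rfl fun k hk => ?_
        rw [Finset.mem_Iic] at hk
        rw [← Finset.sum_mul, key k hk]
    _ = f (s, fun b => -(l b : ℤ)) := by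
        rw [Finset.sum_eq_single_of_mem (0 : Fin q → ℕ)
          (Finset.mem_Iic.mpr (fun a => Nat.zero_le _))]
        · simp
        · intro k _ hk0
          simp [hk0]
end

section
/- In the multivariate formal power series ring ℚ[[t_1,…,t_r]], the product ∏_{i=1}^r ((1 − t_i − ⋯ − t_r)·e^{t_i+⋯+t_r} − 1)/((e^{t_i+⋯+t_r} − 1)²) is a well-defined formal power series (i.e., each factor ((1 − y)e^y − 1)/((e^y − 1)²) is a formal power series in y with constant term −1/2 after substituting y = t_i + ⋯ + t_r), and its coefficient of t_1^{k_1}⋯t_r^{k_r} multiplied by (−1)^{k_1+⋯+k_r} k_1!⋯k_r! equals (−1)^{k_1+⋯+k_r} ∑ over ν_{ij} ≥ 0 with ν_{1i}+⋯+ν_{ii} = k_i (1 ≤ i ≤ r) of ∏_{i=1}^r (k_i!/∏_{j=i}^r ν_{ij}!) · B_{ν_{ii}+⋯+ν_{ir}+1}. -/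
open Finset

/-- `e^{t_i + ⋯ + t_r}` in `ℚ[[t₁,…,t_r]]`. -/
noncomputable def Eexp (r : ℕ) (i : Fin r) : MvPowerSeries (Fin r) ℚ :=
  fun d => if ∀ j, j < i → d j = 0 then (∏ j, ((d j).factorial : ℚ))⁻¹ else 0

/-- `t_i + ⋯ + t_r` in `ℚ[[t₁,…,t_r]]`. -/
noncomputable def Ysum (r : ℕ) (i : Fin r) : MvPowerSeries (Fin r) ℚ :=
  ∑ j ∈ univ.filter (fun j => i ≤ j), MvPowerSeries.X j

namespace Stmt13

open PowerSeries

noncomputable def Bser : PowerSeries ℚ := derivativeFun (bernoulliPowerSeries ℚ)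

lemma derivativeFun_eq' (f : PowerSeries ℚ) : derivativeFun f = d⁄dX ℚ f := rfl

lemma coeff_Bser (n : ℕ) : PowerSeries.coeff n Bser = bernoulli (n+1) / n.factorial := by
  rw [Bser, derivativeFun_eq', coeff_derivativeFun, bernoulliPowerSeries, coeff_mk]
  simp only [Algebra.algebraMap_self, map_div₀, RingHom.id_apply, eq_ratCast, Rat.cast_natCast]
  rw [Nat.factorial_succ]
  have h1 : ((n+1).factorial : ℚ) ≠ 0 := Nat.cast_ne_zero.2 (Nat.factorial_ne_zero _)
  have h2 : (n.factorial : ℚ) ≠ 0 := Nat.cast_ne_zero.2 (Nat.factorial_ne_zero _)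
  field_simp
  push_cast
  ring

lemma derivativeFun_exp' : derivativeFun (exp ℚ - 1) = exp ℚ := by
  ext n
  rw [derivativeFun_eq', coeff_derivativeFun, map_sub, coeff_exp, coeff_exp, PowerSeries.coeff_one,
    if_neg (Nat.succ_ne_zero n)]
  have h1 : ((n+1).factorial : ℚ) ≠ 0 := Nat.cast_ne_zero.2 (Nat.factorial_ne_zero _)
  have h2 : (n.factorial : ℚ) ≠ 0 := Nat.cast_ne_zero.2 (Nat.factorial_ne_zero _)
  simp only [Algebra.algebraMap_self, RingHom.id_apply, sub_zero]
  rw [Nat.factorial_succ]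
  field_simp
  push_cast
  ring

lemma derivativeFun_X' : derivativeFun (X : PowerSeries ℚ) = 1 := by
  ext n
  rw [derivativeFun_eq', coeff_derivativeFun, PowerSeries.coeff_X, PowerSeries.coeff_one]
  rcases n with _ | n <;> simp

lemma Bser_key : Bser * (exp ℚ - 1)^2 = (1 - X) * exp ℚ - 1 := by
  have e1 := bernoulliPowerSeries_mul_exp_sub_one ℚ
  have e2 : derivativeFun (bernoulliPowerSeries ℚ * (exp ℚ - 1)) = 1 := by
    rw [e1, derivativeFun_X']
  rw [derivativeFun_mul, derivativeFun_exp', smul_eq_mul, smul_eq_mul, ← Bser] at e2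
  linear_combination (exp ℚ - 1) * e2 - exp ℚ * e1


noncomputable def deg {r : ℕ} (d : Fin r →₀ ℕ) : ℕ := ∑ j, d j

lemma deg_add {r : ℕ} (d e : Fin r →₀ ℕ) : deg (d + e) = deg d + deg e := by
  simp [deg, Finsupp.add_apply, Finset.sum_add_distrib]

lemma deg_zero {r : ℕ} : deg (0 : Fin r →₀ ℕ) = 0 := by simp [deg]

lemma prod_X_pow {r : ℕ} (S : Finset (Fin r)) (k : Fin r → ℕ) :
    ∏ j ∈ S, (MvPowerSeries.X j : MvPowerSeries (Fin r) ℚ) ^ k j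
      = MvPowerSeries.monomial (∑ j ∈ S, Finsupp.single j (k j)) 1 := by
  classical
  induction S using Finset.cons_induction with
  | empty => simp
  | cons a s ha ih =>
      rw [Finset.prod_cons, Finset.sum_cons, ih, MvPowerSeries.X_pow_eq,
        MvPowerSeries.monomial_mul_monomial, one_mul]

lemma esum_apply {r : ℕ} (S : Finset (Fin r)) (k : Fin r → ℕ) (a : Fin r) :
    (∑ j ∈ S, Finsupp.single j (k j)) a = if a ∈ S then k a else 0 := by
  classical
  rw [Finsupp.finset_sum_apply]
  simp only [Finsupp.single_apply]
  exact Finset.sum_ite_eq' S a k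

/-- Coefficient of `(t_i + ⋯ + t_r)^n`. -/
lemma coeff_Ysum_pow {r : ℕ} (i : Fin r) (d : Fin r →₀ ℕ) (n : ℕ) :
    MvPowerSeries.coeff d (Ysum r i ^ n) =
      if deg d = n ∧ ∀ j, j < i → d j = 0 then
        (n.factorial : ℚ) / ∏ j, ((d j).factorial : ℚ) else 0 := by
  classical
  set S : Finset (Fin r) := univ.filter (fun j => i ≤ j) with hS
  have hmemS : ∀ j : Fin r, j ∈ S ↔ i ≤ j := by
    intro j; simp [hS]
  rw [Ysum, Finset.sum_pow_eq_sum_piAntidiag, map_sum]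
  have hterm : ∀ k ∈ piAntidiag S n,
      MvPowerSeries.coeff d ((Nat.multinomial S k : MvPowerSeries (Fin r) ℚ) *
        ∏ j ∈ S, (MvPowerSeries.X j : MvPowerSeries (Fin r) ℚ) ^ k j)
      = (Nat.multinomial S k : ℚ) *
          (if d = ∑ j ∈ S, Finsupp.single j (k j) then 1 else 0) := by
    intro k _
    rw [prod_X_pow, ← nsmul_eq_mul, map_nsmul, MvPowerSeries.coeff_monomial, nsmul_eq_mul]
  rw [Finset.sum_congr rfl hterm]
  by_cases hC : deg d = n ∧ ∀ j, j < i → d j = 0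
  · obtain ⟨hdeg, hsupp⟩ := hC
    have hsupp' : ∀ j : Fin r, d j ≠ 0 → j ∈ S := by
      intro j hj
      rw [hmemS]
      by_contra h
      exact hj (hsupp j (lt_of_not_ge h))
    have hsum : ∑ j ∈ S, d j = n := by
      rw [← hdeg, deg]
      exact Finset.sum_filter_of_ne (fun x _ hx => le_of_not_gt
        (fun h => hx (hsupp x h)))
    have hmem : ⇑d ∈ piAntidiag S n := by
      rw [mem_piAntidiag]; exact ⟨hsum, hsupp'⟩
    rw [if_pos ⟨hdeg, hsupp⟩]
    rw [Finset.sum_eq_single (⇑d)]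
    · have hd : d = ∑ j ∈ S, Finsupp.single j (d j) := by
        ext a
        rw [esum_apply]
        by_cases ha : a ∈ S
        · rw [if_pos ha]
        · rw [if_neg ha]
          by_contra h
          exact ha (hsupp' a h)
      rw [if_pos hd, mul_one]
      -- multinomial = n! / ∏ j, (d j)!
      have hprod : ∏ j, ((d j).factorial : ℚ) = ∏ j ∈ S, ((d j).factorial : ℚ) := by
        symm
        apply Finset.prod_filter_of_ne
        intro x _ hx
        by_contra h
        exact hx (by rw [hsupp x (lt_of_not_ge h)]; norm_num)
      have hspec := Nat.multinomial_spec S ⇑d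
      have hne : (∏ j, ((d j).factorial : ℚ)) ≠ 0 := by
        apply Finset.prod_ne_zero_iff.2
        intro j _
        exact Nat.cast_ne_zero.2 (Nat.factorial_ne_zero _)
      rw [eq_div_iff hne, hprod, mul_comm, ← Nat.cast_prod, ← Nat.cast_mul, hspec, hsum]
    · intro k hk hkd
      have : d ≠ ∑ j ∈ S, Finsupp.single j (k j) := by
        intro h
        apply hkd
        funext a
        rw [mem_piAntidiag] at hk
        have := congrArg (fun f : Fin r →₀ ℕ => f a) h
        rw [esum_apply] at this
        by_cases ha : a ∈ S
        · rw [if_pos ha] at this; exact this.symm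
        · rw [if_neg ha] at this
          have hk0 : k a = 0 := by
            by_contra h0
            exact ha (hk.2 a h0)
          rw [this, hk0]
      rw [if_neg this, mul_zero]
    · intro h
      exact absurd hmem h
  · rw [if_neg hC]
    apply Finset.sum_eq_zero
    intro k hk
    rw [mem_piAntidiag] at hk
    have : d ≠ ∑ j ∈ S, Finsupp.single j (k j) := by
      intro h
      apply hC
      constructor
      · rw [deg, h]
        calc ∑ a, (∑ j ∈ S, Finsupp.single j (k j)) a
            = ∑ a, if a ∈ S then k a else 0 := by
              apply Finset.sum_congr rfl; intro a _; rw [esum_apply]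
          _ = ∑ a ∈ S, k a := by rw [Finset.sum_ite_mem, Finset.univ_inter]
          _ = n := hk.1
      · intro j hj
        rw [h, esum_apply, if_neg]
        rw [hmemS]
        exact not_le.2 hj
    rw [if_neg this, mul_zero]


lemma coeff_Ysum_pow_ne {r : ℕ} (i : Fin r) {d : Fin r →₀ ℕ} {n : ℕ} (h : deg d ≠ n) :
    MvPowerSeries.coeff d (Ysum r i ^ n) = 0 := by
  rw [coeff_Ysum_pow, if_neg (fun hc => h hc.1)]

noncomputable def sub (r : ℕ) (i : Fin r) (f : PowerSeries ℚ) : MvPowerSeries (Fin r) ℚ :=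
  fun d => PowerSeries.coeff (deg d) f * MvPowerSeries.coeff d (Ysum r i ^ deg d)

lemma coeff_sub (r : ℕ) (i : Fin r) (f : PowerSeries ℚ) (d : Fin r →₀ ℕ) :
    MvPowerSeries.coeff d (sub r i f) =
      PowerSeries.coeff (deg d) f * MvPowerSeries.coeff d (Ysum r i ^ deg d) := rfl

lemma sub_one (r : ℕ) (i : Fin r) : sub r i 1 = 1 := by
  ext d
  rw [coeff_sub, PowerSeries.coeff_one, MvPowerSeries.coeff_one]
  by_cases hd : d = 0
  · subst hd
    rw [if_pos deg_zero, if_pos rfl, deg_zero, pow_zero, MvPowerSeries.coeff_one, if_pos rfl]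
    norm_num
  · rw [if_neg hd, if_neg]
    · ring
    · intro h
      exact hd (by
        ext a
        have := Finset.sum_eq_zero_iff.1 (h : ∑ j, d j = 0) a (mem_univ a)
        simpa using this)

lemma sub_add (r : ℕ) (i : Fin r) (f g : PowerSeries ℚ) :
    sub r i (f + g) = sub r i f + sub r i g := by
  ext d
  rw [map_add, coeff_sub, coeff_sub, coeff_sub, map_add, add_mul]

lemma sub_mul (r : ℕ) (i : Fin r) (f g : PowerSeries ℚ) :
    sub r i (f * g) = sub r i f * sub r i g := by
  ext d
  rw [coeff_sub, MvPowerSeries.coeff_mul, PowerSeries.coeff_mul, Finset.sum_mul]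
  have step1 : ∀ p ∈ Finset.HasAntidiagonal.antidiagonal (deg d),
      PowerSeries.coeff p.1 f * PowerSeries.coeff p.2 g *
        MvPowerSeries.coeff d (Ysum r i ^ deg d)
      = ∑ q ∈ Finset.HasAntidiagonal.antidiagonal d,
          PowerSeries.coeff p.1 f * PowerSeries.coeff p.2 g *
            (MvPowerSeries.coeff q.1 (Ysum r i ^ p.1) *
             MvPowerSeries.coeff q.2 (Ysum r i ^ p.2)) := by
    intro p hp
    rw [Finset.HasAntidiagonal.mem_antidiagonal] at hp
    rw [← hp, pow_add, MvPowerSeries.coeff_mul, Finset.mul_sum]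
  rw [Finset.sum_congr rfl step1, Finset.sum_comm]
  apply Finset.sum_congr rfl
  intro q hq
  rw [Finset.HasAntidiagonal.mem_antidiagonal] at hq
  rw [Finset.sum_eq_single (deg q.1, deg q.2)]
  · rw [coeff_sub, coeff_sub]; ring
  · intro p hp hne
    rw [Finset.HasAntidiagonal.mem_antidiagonal] at hp
    by_cases h1 : p.1 = deg q.1
    · exfalso
      apply hne
      have hdd : deg d = deg q.1 + deg q.2 := by rw [← hq, deg_add]
      exact Prod.ext h1 (by omega)
    · rw [coeff_Ysum_pow_ne i (fun hh => h1 hh.symm)]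
      ring
  · intro h
    exfalso
    apply h
    rw [Finset.HasAntidiagonal.mem_antidiagonal, ← deg_add, hq]

noncomputable def subHom (r : ℕ) (i : Fin r) : PowerSeries ℚ →+* MvPowerSeries (Fin r) ℚ where
  toFun := sub r i
  map_one' := sub_one r i
  map_mul' := sub_mul r i
  map_zero' := by
    ext d
    rw [coeff_sub, map_zero, zero_mul, map_zero]
  map_add' := sub_add r i

lemma coeff_subHom (r : ℕ) (i : Fin r) (f : PowerSeries ℚ) (d : Fin r →₀ ℕ) :
    MvPowerSeries.coeff d (subHom r i f) =
      PowerSeries.coeff (deg d) f * MvPowerSeries.coeff d (Ysum r i ^ deg d) := rfl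

lemma subHom_X (r : ℕ) (i : Fin r) : subHom r i PowerSeries.X = Ysum r i := by
  ext d
  show MvPowerSeries.coeff d (sub r i PowerSeries.X) = _
  rw [coeff_sub, PowerSeries.coeff_X]
  by_cases h : deg d = 1
  · rw [if_pos h, one_mul, h, pow_one]
  · rw [if_neg h, zero_mul]
    have := coeff_Ysum_pow_ne i (n := 1) h
    rw [pow_one] at this
    rw [this]

lemma subHom_exp (r : ℕ) (i : Fin r) : subHom r i (PowerSeries.exp ℚ) = Eexp r i := by
  ext d
  show MvPowerSeries.coeff d (sub r i (PowerSeries.exp ℚ)) = _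
  rw [coeff_sub, PowerSeries.coeff_exp, coeff_Ysum_pow]
  have hEexp : MvPowerSeries.coeff d (Eexp r i)
      = if ∀ j, j < i → d j = 0 then (∏ j, ((d j).factorial : ℚ))⁻¹ else 0 := rfl
  rw [hEexp]
  by_cases hc : ∀ j, j < i → d j = 0
  · rw [if_pos ⟨rfl, hc⟩, if_pos hc]
    have h1 : ((deg d).factorial : ℚ) ≠ 0 := Nat.cast_ne_zero.2 (Nat.factorial_ne_zero _)
    simp only [Algebra.algebraMap_self, RingHom.id_apply]
    rw [div_eq_mul_inv, div_eq_mul_inv, one_mul]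
    rw [← mul_assoc, inv_mul_cancel₀ h1, one_mul]
  · rw [if_neg (fun hh => hc hh.2), if_neg hc, mul_zero]


noncomputable def F (r : ℕ) (i : Fin r) : MvPowerSeries (Fin r) ℚ := subHom r i Bser

lemma coeff_F (r : ℕ) (i : Fin r) (d : Fin r →₀ ℕ) :
    MvPowerSeries.coeff d (F r i) =
      if ∀ j, j < i → d j = 0 then
        bernoulli (deg d + 1) * (∏ j, ((d j).factorial : ℚ))⁻¹ else 0 := by
  rw [F, coeff_subHom, coeff_Bser, coeff_Ysum_pow]
  by_cases hc : ∀ j, j < i → d j = 0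
  · rw [if_pos ⟨rfl, hc⟩, if_pos hc]
    have h1 : ((deg d).factorial : ℚ) ≠ 0 := Nat.cast_ne_zero.2 (Nat.factorial_ne_zero _)
    field_simp
  · rw [if_neg (fun hh => hc hh.2), if_neg hc, mul_zero]

lemma F_eq (r : ℕ) (i : Fin r) :
    F r i * (Eexp r i - 1) ^ 2 = (1 - Ysum r i) * Eexp r i - 1 := by
  have h := congrArg (subHom r i) Bser_key
  simp only [map_sub, map_mul, map_pow, map_one] at h
  rw [subHom_X, subHom_exp] at h
  exact h

lemma constF (r : ℕ) (i : Fin r) :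
    MvPowerSeries.constantCoeff (F r i) = -(1/2) := by
  have h := coeff_F r i 0
  rw [MvPowerSeries.coeff_zero_eq_constantCoeff] at h
  rw [h]
  have hc : ∀ j, j < i → (0 : Fin r →₀ ℕ) j = 0 := fun j _ => rfl
  rw [if_pos hc]
  have : deg (0 : Fin r →₀ ℕ) = 0 := by simp [deg]
  rw [this]
  norm_num [bernoulli_one]

end Stmt13

open Stmt13 in
/-- The product `∏_{i=1}^r ((1 − t_i − ⋯ − t_r)e^{t_i+⋯+t_r} − 1)/((e^{t_i+⋯+t_r} − 1)²)`
is a well-defined formal power series: there are power series `F i` with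
`F i · (e^{t_i+⋯+t_r} − 1)² = (1 − t_i − ⋯ − t_r)e^{t_i+⋯+t_r} − 1`, each with
constant term `−1/2`, and the coefficients of `∏ i, F i` are given by the
Furusho–Komori–Matsumoto–Tsumura Bernoulli-number formula. -/
theorem stmt_13 (r : ℕ) (hr : 1 ≤ r) :
    ∃ F : Fin r → MvPowerSeries (Fin r) ℚ,
      (∀ i, F i * (Eexp r i - 1) ^ 2 = (1 - Ysum r i) * Eexp r i - 1) ∧
      (∀ i, MvPowerSeries.constantCoeff (F i) = -(1 / 2)) ∧
      ∀ k : Fin r → ℕ,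
        (-1 : ℚ) ^ (∑ i, k i) * (∏ i, ((k i).factorial : ℚ)) *
            MvPowerSeries.coeff (Finsupp.equivFunOnFinite.symm k) (∏ i, F i) =
          (-1 : ℚ) ^ (∑ i, k i) *
            ∑ ν ∈ (Finset.Iic (fun _ i => k i : Fin r → Fin r → ℕ)).filter
              (fun ν => (∀ i, ∑ a ∈ univ.filter (fun a => a ≤ i), ν a i = k i) ∧
                ∀ a i, i < a → ν a i = 0),
              ∏ i,
                ((k i).factorial : ℚ) /
                    (∏ j ∈ univ.filter (fun j => i ≤ j), ((ν i j).factorial : ℚ)) *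
                  bernoulli ((∑ j ∈ univ.filter (fun j => i ≤ j), ν i j) + 1) := by
  classical
  refine ⟨fun i => F r i, fun i => F_eq r i, fun i => constF r i, ?_⟩
  intro k
  set k' : Fin r →₀ ℕ := Finsupp.equivFunOnFinite.symm k with hk'
  have hk'app : ∀ j, k' j = k j := fun j => rfl
  rw [mul_assoc]
  congr 1
  rw [MvPowerSeries.coeff_prod, Finset.mul_sum]
  have hterm : ∀ l : Fin r →₀ (Fin r →₀ ℕ),
      (∏ i, ((k i).factorial : ℚ)) * ∏ i, MvPowerSeries.coeff (l i) (F r i)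
      = ∏ i, (((k i).factorial : ℚ) * MvPowerSeries.coeff (l i) (F r i)) := by
    intro l; rw [Finset.prod_mul_distrib]
  rw [Finset.sum_congr rfl (fun l _ => hterm l)]
  -- restrict to triangular l
  rw [← Finset.sum_filter_of_ne
    (p := fun l : Fin r →₀ (Fin r →₀ ℕ) => ∀ a j, j < a → (l a) j = 0)
    (by
      intro l _ hne a j hj
      by_contra h0
      apply hne
      apply Finset.prod_eq_zero (Finset.mem_univ a)
      rw [coeff_F, if_neg, mul_zero]
      intro hall
      exact h0 (hall j hj))]
  -- bijection
  refine Finset.sum_nbij' (i := fun l : Fin r →₀ (Fin r →₀ ℕ) => fun a j => (l a) j)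
    (j := fun ν : Fin r → Fin r → ℕ =>
      Finsupp.equivFunOnFinite.symm (fun a => Finsupp.equivFunOnFinite.symm (ν a)))
    ?_ ?_ ?_ ?_ ?_
  · -- maps into T
    intro l hl
    rw [Finset.mem_filter] at hl
    obtain ⟨hlA, hltri⟩ := hl
    rw [Finset.mem_finsuppAntidiag] at hlA
    have hsum : ∀ j, ∑ a, (l a) j = k j := by
      intro j
      have := congrArg (fun f : Fin r →₀ ℕ => f j) hlA.1
      simpa [Finsupp.finset_sum_apply, hk'app] using this
    rw [Finset.mem_filter]
    refine ⟨?_, ?_, ?_⟩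
    · rw [Finset.mem_Iic]
      intro a
      intro j
      show (l a) j ≤ k j
      rw [← hsum j]
      exact Finset.single_le_sum (f := fun b => (l b) j) (fun _ _ => Nat.zero_le _)
        (Finset.mem_univ a)
    · intro j
      show ∑ a ∈ univ.filter (fun a => a ≤ j), (l a) j = k j
      rw [← hsum j]
      exact Finset.sum_filter_of_ne (fun a _ ha => by
        by_contra h
        exact ha (hltri a j (lt_of_not_ge h)))
    · intro a j hj
      exact hltri a j hj
  · -- maps back
    intro ν hν
    rw [Finset.mem_filter] at hν
    obtain ⟨_, hcol, htri⟩ := hν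
    rw [Finset.mem_filter, Finset.mem_finsuppAntidiag]
    have happ : ∀ a j, ((Finsupp.equivFunOnFinite.symm
        (fun a => Finsupp.equivFunOnFinite.symm (ν a)) : Fin r →₀ (Fin r →₀ ℕ)) a) j
        = ν a j := fun a j => rfl
    refine ⟨⟨?_, fun x _ => Finset.mem_univ x⟩, ?_⟩
    · ext j
      rw [Finsupp.finset_sum_apply]
      have : ∑ a, ν a j = k j := by
        rw [← hcol j]
        exact (Finset.sum_filter_of_ne (fun a _ ha => by
          by_contra h
          exact ha (htri a j (lt_of_not_ge h)))).symm
      simpa [happ, hk'app] using this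
    · intro a j hj
      rw [happ]
      exact htri a j hj
  · -- left inverse
    intro l _
    ext a j
    rfl
  · -- right inverse
    intro ν _
    funext a j
    rfl
  · -- values agree
    intro l hl
    rw [Finset.mem_filter] at hl
    obtain ⟨_, hltri⟩ := hl
    dsimp only
    apply Finset.prod_congr rfl
    intro a _
    rw [coeff_F, if_pos (fun j hj => hltri a j hj)]
    have hdeg : deg (l a) = ∑ j ∈ univ.filter (fun j => a ≤ j), (l a) j := by
      rw [deg]
      exact (Finset.sum_filter_of_ne (fun j _ hj => by
        by_contra h
        exact hj (hltri a j (lt_of_not_ge h)))).symm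
    have hprod : ∏ j, (((l a) j).factorial : ℚ)
        = ∏ j ∈ univ.filter (fun j => a ≤ j), (((l a) j).factorial : ℚ) := by
      exact (Finset.prod_filter_of_ne (fun j _ hj => by
        by_contra h
        exact hj (by rw [hltri a j (lt_of_not_ge h)]; norm_num))).symm
    rw [hdeg, hprod]
    rw [div_eq_mul_inv]
    ring
end

section
/- For every nonnegative integer n, the coefficient of y^n in the formal power series expansion of ((1 − y)e^y − 1)/((e^y − 1)²) equals B_{n+1}/n!, where B_m are the Bernoulli numbers. -/
open PowerSeries

lemma deriv_exp' : d⁄dX ℚ (PowerSeries.exp ℚ) = PowerSeries.exp ℚ := by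
  ext n
  rw [coeff_derivative, coeff_exp, coeff_exp, Nat.factorial_succ]
  push_cast
  field_simp

lemma key : d⁄dX ℚ (bernoulliPowerSeries ℚ) * (PowerSeries.exp ℚ - 1) ^ 2
    = (1 - PowerSeries.X) * PowerSeries.exp ℚ - 1 := by
  have h := bernoulliPowerSeries_mul_exp_sub_one ℚ
  have h' := congrArg (d⁄dX ℚ) h
  rw [Derivation.leibniz] at h'
  simp only [map_sub, deriv_exp', derivative_X, Derivation.map_one_eq_zero, sub_zero, smul_eq_mul] at h'
  linear_combination (PowerSeries.exp ℚ - 1) * h' - PowerSeries.exp ℚ * h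

/-- If `G ∈ ℚ[[y]]` satisfies `G·(e^y − 1)² = (1 − y)e^y − 1`, i.e.
`G = ((1 − y)e^y − 1)/((e^y − 1)²)`, then the coefficient of `y^n` in `G` is
`B_{n+1}/n!`. -/
theorem stmt_14 (G : PowerSeries ℚ)
    (hG : G * (PowerSeries.exp ℚ - 1) ^ 2 = (1 - PowerSeries.X) * PowerSeries.exp ℚ - 1) :
    ∀ n : ℕ, PowerSeries.coeff n G = bernoulli (n + 1) / (n.factorial : ℚ) := by
  have hne : (PowerSeries.exp ℚ - 1) ^ 2 ≠ 0 := by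
    apply pow_ne_zero
    intro h
    have := congrArg (PowerSeries.coeff 1) h
    simp [coeff_exp] at this
  have hGeq : G = d⁄dX ℚ (bernoulliPowerSeries ℚ) :=
    mul_right_cancel₀ hne (hG.trans key.symm)
  intro n
  rw [hGeq, coeff_derivative, bernoulliPowerSeries, coeff_mk]
  simp only [Nat.factorial_succ, Algebra.algebraMap_self, RingHom.id_apply]
  push_cast
  field_simp
end

section
/- Let r ≥ 1, let γ_1,…,γ_r be positive reals, and let s_1,…,s_r be complex numbers satisfying Re(s_{r−k+1} + ⋯ + s_r) > k for every 1 ≤ k ≤ r. Then the multiple series ∑_{m_1,…,m_r ≥ 1} ∏_{k=1}^r (γ_1 m_1 + ⋯ + γ_k m_k)^{−s_k} converges absolutely. -/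
open Finset

section helpers

lemma stmt_18_keyA (c b : ℝ) (hc : 0 ≤ c) (hb0 : 0 < b) :
    ∀ n : ℕ, ∀ w u σ : ℕ → ℝ,
      (∀ k, k < n → 0 < u k) →
      (∀ k, k < n → u k ≤ w k) →
      (∀ k, k + 1 < n → w k ≤ w (k + 1)) →
      (∀ k, k < n → b ≤ w k) →
      (∀ k, k < n → ((n : ℝ) - k) * c ≤ ∑ j ∈ Finset.Ico k n, σ j) →
      ∏ k ∈ Finset.range n, w k ^ (-σ k) ≤
        b ^ (-((∑ j ∈ Finset.range n, σ j) - n * c)) *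
          ∏ k ∈ Finset.range n, u k ^ (-c) := by
  intro n
  induction n with
  | zero => intro w u σ _ _ _ _ _; simp
  | succ n ih =>
    intro w u σ hu huw hmono hbw htail
    have hwpos : ∀ k, k < n + 1 → 0 < w k := fun k hk => lt_of_lt_of_le hb0 (hbw k hk)
    -- c ≤ σ n (tail at top index)
    have hσtop : c ≤ σ n := by
      have := htail n (by omega)
      rw [Nat.Ico_succ_singleton, Finset.sum_singleton] at this
      push_cast at this
      linarith
    rcases n with _ | m
    · -- n+1 = 1
      simp only [zero_add, Finset.prod_range_one, Finset.sum_range_one]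
      have hw0 : 0 < w 0 := hwpos 0 (by omega)
      have : w 0 ^ (-σ 0) = w 0 ^ (-(σ 0 - c)) * w 0 ^ (-c) := by
        rw [← Real.rpow_add hw0]; ring_nf
      rw [this]
      push_cast
      have h1 : w 0 ^ (-(σ 0 - c)) ≤ b ^ (-(σ 0 - c)) :=
        Real.rpow_le_rpow_of_nonpos hb0 (hbw 0 (by omega)) (by linarith)
      have h2 : w 0 ^ (-c) ≤ u 0 ^ (-c) :=
        Real.rpow_le_rpow_of_nonpos (hu 0 (by omega)) (huw 0 (by omega)) (by linarith)
      have := mul_le_mul h1 h2 (Real.rpow_nonneg hw0.le _) (Real.rpow_nonneg hb0.le _)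
      calc w 0 ^ (-(σ 0 - c)) * w 0 ^ (-c) ≤ b ^ (-(σ 0 - c)) * u 0 ^ (-c) := this
        _ = b ^ (-(σ 0 - 1 * c)) * u 0 ^ (-c) := by ring_nf
    · -- n+1 = m+2, peel index m+1, update at m
      set σ' : ℕ → ℝ := Function.update σ m (σ m + (σ (m + 1) - c)) with hσ'
      have hmmem : m ∈ Finset.range (m + 1) := by simp
      -- product identity
      have hwm : 0 < w m := hwpos m (by omega)
      have prodid : ∏ k ∈ Finset.range (m + 1), w k ^ (-σ' k)
          = (∏ k ∈ Finset.range (m + 1), w k ^ (-σ k)) * w m ^ (-(σ (m + 1) - c)) := by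
        rw [Finset.prod_range_succ, Finset.prod_range_succ]
        have hcong : ∀ k ∈ Finset.range m, w k ^ (-σ' k) = w k ^ (-σ k) := by
          intro k hk
          have : k ≠ m := by simp at hk; omega
          rw [hσ', Function.update_of_ne this]
        rw [Finset.prod_congr rfl hcong]
        have : σ' m = σ m + (σ (m + 1) - c) := by rw [hσ']; simp
        rw [this, neg_add, Real.rpow_add hwm]
        ring
      -- sum identities
      have sumIco : ∀ k, k < m + 1 →
          ∑ j ∈ Finset.Ico k (m + 1), σ' j = (∑ j ∈ Finset.Ico k (m + 2), σ j) - c := by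
        intro k hk
        have hmem : m ∈ Finset.Ico k (m + 1) := by simp; omega
        have e1 : ∑ j ∈ Finset.Ico k (m + 1), σ' j
            = σ' m + ∑ j ∈ (Finset.Ico k (m + 1)).erase m, σ' j :=
          (Finset.add_sum_erase _ _ hmem).symm
        have e2 : ∑ j ∈ Finset.Ico k (m + 1), σ j
            = σ m + ∑ j ∈ (Finset.Ico k (m + 1)).erase m, σ j :=
          (Finset.add_sum_erase _ _ hmem).symm
        have e3 : ∑ j ∈ (Finset.Ico k (m + 1)).erase m, σ' j
            = ∑ j ∈ (Finset.Ico k (m + 1)).erase m, σ j := by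
          apply Finset.sum_congr rfl
          intro j hj
          have : j ≠ m := (Finset.mem_erase.1 hj).1
          rw [hσ', Function.update_of_ne this]
        have e4 : ∑ j ∈ Finset.Ico k (m + 2), σ j
            = (∑ j ∈ Finset.Ico k (m + 1), σ j) + σ (m + 1) :=
          Finset.sum_Ico_succ_top (by omega) σ
        have e5 : σ' m = σ m + (σ (m + 1) - c) := by rw [hσ']; simp
        rw [e1, e3, e5, e4, e2]; ring
      have sumRange : ∑ j ∈ Finset.range (m + 1), σ' j
          = (∑ j ∈ Finset.range (m + 2), σ j) - c := by
        simp only [Finset.range_eq_Ico]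
        exact sumIco 0 (by omega)
      -- apply ih
      have hih := ih w u σ' (fun k hk => hu k (by omega)) (fun k hk => huw k (by omega))
        (fun k hk => hmono k (by omega)) (fun k hk => hbw k (by omega))
        (fun k hk => by
          have := htail k (by omega)
          rw [sumIco k hk]
          push_cast at this ⊢
          linarith)
      -- peel top
      have hwm1 : 0 < w (m + 1) := hwpos (m + 1) (by omega)
      have peel : w (m + 1) ^ (-σ (m + 1))
          ≤ w m ^ (-(σ (m + 1) - c)) * u (m + 1) ^ (-c) := by
        have e : w (m + 1) ^ (-σ (m + 1))
            = w (m + 1) ^ (-(σ (m + 1) - c)) * w (m + 1) ^ (-c) := by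
          rw [← Real.rpow_add hwm1]; ring_nf
        rw [e]
        have h1 : w (m + 1) ^ (-(σ (m + 1) - c)) ≤ w m ^ (-(σ (m + 1) - c)) :=
          Real.rpow_le_rpow_of_nonpos hwm (hmono m (by omega)) (by linarith)
        have h2 : w (m + 1) ^ (-c) ≤ u (m + 1) ^ (-c) :=
          Real.rpow_le_rpow_of_nonpos (hu (m + 1) (by omega)) (huw (m + 1) (by omega))
            (by linarith)
        exact mul_le_mul h1 h2 (Real.rpow_nonneg hwm1.le _) (Real.rpow_nonneg hwm.le _)
      push_cast at hih
      have prodnn : (0:ℝ) ≤ ∏ k ∈ Finset.range (m + 1), w k ^ (-σ k) :=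
        Finset.prod_nonneg fun k hk => Real.rpow_nonneg (hwpos k (by simp at hk; omega)).le _
      calc ∏ k ∈ Finset.range (m + 2), w k ^ (-σ k)
          = (∏ k ∈ Finset.range (m + 1), w k ^ (-σ k)) * w (m + 1) ^ (-σ (m + 1)) :=
            Finset.prod_range_succ _ _
        _ ≤ (∏ k ∈ Finset.range (m + 1), w k ^ (-σ k)) *
            (w m ^ (-(σ (m + 1) - c)) * u (m + 1) ^ (-c)) :=
            mul_le_mul_of_nonneg_left peel prodnn
        _ = (∏ k ∈ Finset.range (m + 1), w k ^ (-σ' k)) * u (m + 1) ^ (-c) := by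
            rw [prodid]; ring
        _ ≤ (b ^ (-((∑ j ∈ Finset.range (m + 1), σ' j) - ((m:ℝ) + 1) * c)) *
              ∏ k ∈ Finset.range (m + 1), u k ^ (-c)) * u (m + 1) ^ (-c) :=
            mul_le_mul_of_nonneg_right hih (Real.rpow_nonneg (hu (m+1) (by omega)).le _)
        _ = b ^ (-((∑ j ∈ Finset.range (m + 1 + 1), σ j) - ((m + 1 + 1 : ℕ) : ℝ) * c)) *
              ∏ k ∈ Finset.range (m + 1 + 1), u k ^ (-c) := by
            rw [sumRange, mul_assoc, ← Finset.prod_range_succ (fun k => u k ^ (-c)) (m + 1)]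
            congr 2
            push_cast
            ring

lemma stmt_18_pi_prod : ∀ (n : ℕ) (h : ℕ → ℝ), Summable h → (∀ i, 0 ≤ h i) →
    Summable (fun m : Fin n → ℕ => ∏ k, h (m k)) := by
  intro n
  induction n with
  | zero =>
    intro h _ _
    exact Summable.of_finite
  | succ n ih =>
    intro h hs hnn
    rw [← (Fin.consEquiv (fun _ : Fin (n + 1) => ℕ)).summable_iff]
    have : Summable (fun p : ℕ × (Fin n → ℕ) => h p.1 * ∏ k, h (p.2 k)) := by
      have h0 : (0 : ℕ → ℝ) ≤ h := fun i => hnn i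
      have h0' : (0 : (Fin n → ℕ) → ℝ) ≤ fun m : Fin n → ℕ => ∏ k, h (m k) :=
        fun m => Finset.prod_nonneg fun k _ => hnn _
      exact Summable.mul_of_nonneg (g := fun m : Fin n → ℕ => ∏ k, h (m k)) hs (ih h hs hnn) h0 h0'
    apply this.congr
    intro p
    simp [Fin.consEquiv, Fin.prod_univ_succ]

lemma stmt_18_single (c : ℝ) (hc : 1 < c) :
    Summable (fun n : ℕ => ((n : ℝ) + 1) ^ (-c)) := by
  have h1 : Summable (fun n : ℕ => (n : ℝ) ^ (-c)) :=
    Real.summable_nat_rpow.2 (by linarith)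
  have h2 := (summable_nat_add_iff (f := fun n : ℕ => (n : ℝ) ^ (-c)) 1).2 h1
  apply h2.congr
  intro n
  push_cast
  rfl

end helpers

theorem stmt_18 (r : ℕ) (hr : 1 ≤ r) (γ : Fin r → ℝ) (hγ : ∀ j, 0 < γ j)
    (s : Fin r → ℂ)
    (hs : ∀ k ∈ Finset.Icc 1 r, (k : ℝ) <
      (∑ j ∈ univ.filter (fun j : Fin r => r - k ≤ (j : ℕ)), s j).re) :
    Summable (fun m : Fin r → ℕ =>
      ‖∏ k : Fin r,
        ((∑ j ∈ univ.filter (fun j => j ≤ k), γ j * ((m j : ℝ) + 1) : ℝ) : ℂ) ^ (-(s k))‖) := by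
  have hFin : Nonempty (Fin r) := ⟨⟨0, hr⟩⟩
  have hne : (Finset.range r).Nonempty := ⟨0, Finset.mem_range.2 hr⟩
  set T : ℕ → ℝ := fun k => ∑ j ∈ univ.filter (fun j : Fin r => k ≤ (j : ℕ)), (s j).re with hT
  have hre : ∀ k, k < r → ((r : ℝ) - k) < T k := by
    intro k hk
    have h1 : r - k ∈ Finset.Icc 1 r := by rw [Finset.mem_Icc]; omega
    have h2 := hs (r - k) h1
    have h3 : r - (r - k) = k := by omega
    rw [h3, Complex.re_sum] at h2
    have h5 : ((r - k : ℕ) : ℝ) = (r : ℝ) - k := by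
      rw [Nat.cast_sub hk.le]
    rw [h5] at h2
    exact h2
  set c : ℝ := (Finset.range r).inf' hne (fun k => T k / ((r : ℝ) - k)) with hc
  have hc1 : 1 < c := by
    rw [hc, Finset.lt_inf'_iff]
    intro k hk
    have hk' := Finset.mem_range.1 hk
    have hd : (0 : ℝ) < (r : ℝ) - k := by
      have : (k : ℝ) < (r : ℝ) := by exact_mod_cast hk'
      linarith
    rw [lt_div_iff₀ hd]
    have := hre k hk'
    linarith
  have hc0 : 0 ≤ c := by linarith
  have hcT : ∀ k, k < r → ((r : ℝ) - k) * c ≤ T k := by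
    intro k hk
    have h := Finset.inf'_le (fun k => T k / ((r : ℝ) - k)) (Finset.mem_range.2 hk)
    have hd : (0 : ℝ) < (r : ℝ) - k := by
      have : (k : ℝ) < (r : ℝ) := by exact_mod_cast hk
      linarith
    rw [← hc, le_div_iff₀ hd] at h
    rw [mul_comm]
    exact h
  set gmin : ℝ := univ.inf' Finset.univ_nonempty γ with hgm
  have hgmin : 0 < gmin := by
    rw [hgm, Finset.lt_inf'_iff]
    exact fun j _ => hγ j
  have hgle : ∀ j, gmin ≤ γ j := fun j => Finset.inf'_le _ (Finset.mem_univ j)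
  set b : ℝ := min gmin 1 with hb
  have hb0 : 0 < b := lt_min hgmin one_pos
  set Cb : ℝ := b ^ (-((∑ j : Fin r, (s j).re) - r * c)) * ∏ j : Fin r, γ j ^ (-c) with hCb
  have hsingle := stmt_18_single c hc1
  have hpi := stmt_18_pi_prod r _ hsingle (fun i => Real.rpow_nonneg (by positivity) _)
  have hg : Summable (fun m : Fin r → ℕ => Cb * ∏ k : Fin r, ((m k : ℝ) + 1) ^ (-c)) :=
    hpi.mul_left Cb
  apply Summable.of_nonneg_of_le (fun m => norm_nonneg _) ?_ hg
  intro m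
  set W : Fin r → ℝ := fun k => ∑ j ∈ univ.filter (fun j => j ≤ k), γ j * ((m j : ℝ) + 1)
    with hW
  have hWpos : ∀ k, 0 < W k := by
    intro k
    apply Finset.sum_pos
    · intro j _
      have : (0 : ℝ) < (m j : ℝ) + 1 := by positivity
      exact mul_pos (hγ j) this
    · exact ⟨k, by simp⟩
  have step1 : ‖∏ k : Fin r,
      ((∑ j ∈ univ.filter (fun j => j ≤ k), γ j * ((m j : ℝ) + 1) : ℝ) : ℂ) ^ (-(s k))‖
      = ∏ k : Fin r, W k ^ (-(s k).re) := by
    rw [norm_prod]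
    apply Finset.prod_congr rfl
    intro k _
    rw [Complex.norm_cpow_eq_rpow_re_of_pos (hWpos k), Complex.neg_re]
  -- ℕ-extended functions
  set wN : ℕ → ℝ := fun k => if h : k < r then W ⟨k, h⟩ else 1 with hwN
  set uN : ℕ → ℝ := fun k => if h : k < r then γ ⟨k, h⟩ * ((m ⟨k, h⟩ : ℝ) + 1) else 1 with huN
  set σN : ℕ → ℝ := fun k => if h : k < r then (s ⟨k, h⟩).re else 0 with hσN
  have hupos : ∀ k, k < r → 0 < uN k := by
    intro k hk
    rw [huN]
    simp only [dif_pos hk]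
    have : (0 : ℝ) < (m ⟨k, hk⟩ : ℝ) + 1 := by positivity
    exact mul_pos (hγ _) this
  have huw : ∀ k, k < r → uN k ≤ wN k := by
    intro k hk
    rw [huN, hwN]
    simp only [dif_pos hk]
    apply Finset.single_le_sum (f := fun j => γ j * ((m j : ℝ) + 1))
    · intro j _
      have : (0 : ℝ) ≤ (m j : ℝ) + 1 := by positivity
      exact mul_nonneg (hγ j).le this
    · simp
  have hmono : ∀ k, k + 1 < r → wN k ≤ wN (k + 1) := by
    intro k hk
    have hk' : k < r := by omega
    rw [hwN]
    simp only [dif_pos hk, dif_pos hk']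
    apply Finset.sum_le_sum_of_subset_of_nonneg
    · intro j hj
      simp only [Finset.mem_filter, Finset.mem_univ, true_and] at hj ⊢
      rw [Fin.le_def] at hj ⊢
      simpa using Nat.le_succ_of_le hj
    · intro j _ _
      have : (0 : ℝ) ≤ (m j : ℝ) + 1 := by positivity
      exact mul_nonneg (hγ j).le this
  have hbw : ∀ k, k < r → b ≤ wN k := by
    intro k hk
    refine le_trans ?_ (huw k hk)
    rw [huN]
    simp only [dif_pos hk]
    have h1 : b ≤ γ ⟨k, hk⟩ := le_trans (min_le_left _ _) (hgle _)
    have h2 : γ ⟨k, hk⟩ ≤ γ ⟨k, hk⟩ * ((m ⟨k, hk⟩ : ℝ) + 1) := by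
      nlinarith [hγ ⟨k, hk⟩, (Nat.cast_nonneg (m ⟨k, hk⟩) : (0:ℝ) ≤ (m ⟨k, hk⟩ : ℝ))]
    linarith
  have hIco : ∀ k, k < r → ∑ j ∈ Finset.Ico k r, σN j = T k := by
    intro k hk
    have e0 : Finset.Ico k r = (Finset.range r).filter (fun j => k ≤ j) := by
      ext j
      simp [Finset.mem_Ico, Finset.mem_filter, Finset.mem_range]
      omega
    rw [e0, Finset.sum_filter]
    rw [← Fin.sum_univ_eq_sum_range (fun j => if k ≤ j then σN j else 0) r]
    simp only [hT]
    rw [Finset.sum_filter]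
    apply Finset.sum_congr rfl
    intro j _
    by_cases hkj : k ≤ (j : ℕ)
    · rw [if_pos hkj, if_pos hkj, hσN]
      simp only [dif_pos j.isLt]
    · rw [if_neg hkj, if_neg hkj]
  have htail : ∀ k, k < r → ((r : ℝ) - k) * c ≤ ∑ j ∈ Finset.Ico k r, σN j := by
    intro k hk
    rw [hIco k hk]
    exact hcT k hk
  have hkey := stmt_18_keyA c b hc0 hb0 r wN uN σN hupos huw hmono hbw htail
  -- convert LHS of hkey
  have eL : ∏ k ∈ Finset.range r, wN k ^ (-σN k) = ∏ k : Fin r, W k ^ (-(s k).re) := by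
    rw [← Fin.prod_univ_eq_prod_range (fun k => wN k ^ (-σN k)) r]
    apply Finset.prod_congr rfl
    intro k _
    rw [hwN, hσN]
    simp only [dif_pos k.isLt]
  have eS : ∑ j ∈ Finset.range r, σN j = ∑ j : Fin r, (s j).re := by
    rw [← Fin.sum_univ_eq_sum_range (fun j => σN j) r]
    apply Finset.sum_congr rfl
    intro j _
    rw [hσN]
    simp only [dif_pos j.isLt]
  have eU : ∏ k ∈ Finset.range r, uN k ^ (-c)
      = (∏ j : Fin r, γ j ^ (-c)) * ∏ k : Fin r, ((m k : ℝ) + 1) ^ (-c) := by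
    rw [← Fin.prod_univ_eq_prod_range (fun k => uN k ^ (-c)) r, ← Finset.prod_mul_distrib]
    apply Finset.prod_congr rfl
    intro k _
    rw [huN]
    simp only [dif_pos k.isLt]
    rw [Fin.eta]
    rw [← Real.mul_rpow (hγ k).le (by positivity)]
  rw [eL, eS, eU] at hkey
  calc ‖∏ k : Fin r,
      ((∑ j ∈ univ.filter (fun j => j ≤ k), γ j * ((m j : ℝ) + 1) : ℝ) : ℂ) ^ (-(s k))‖
      = ∏ k : Fin r, W k ^ (-(s k).re) := step1
    _ ≤ b ^ (-((∑ j : Fin r, (s j).re) - r * c)) *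
        ((∏ j : Fin r, γ j ^ (-c)) * ∏ k : Fin r, ((m k : ℝ) + 1) ^ (-c)) := hkey
    _ = Cb * ∏ k : Fin r, ((m k : ℝ) + 1) ^ (-c) := by rw [hCb]; ring
end
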